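/- The Hamiltonian vector fields of X₁ and Y₁ on the open set {p₁ − q₁ > 0} ⊂ ℝ⁴ are complete: every maximal integral curve is defined for all times. (Key step: {X₁, p₁−q₁} = {Y₁, p₁−q₁} = 0, so the flows preserve each level set {p₁ − q₁ = c}, c > 0, on which the vector fields are affine/linear in the remaining variables.) -/

import Mathlib

/-- The Hamiltonian vector field `ξ_f = f_{p₁} ∂_{q₁} + f_{p₂} ∂_{q₂}
 − f_{q₁} ∂_{p₁} − f_{q₂} ∂_{p₂}` of a function `f` on ℝ⁴ with coordinates
`(q₁, q₂, p₁, p₂)` (convention `ξ_f g = {g, f}`). -/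
noncomputable def hamVF (f : ℝ × ℝ × ℝ × ℝ → ℝ) (x : ℝ × ℝ × ℝ × ℝ) :
    ℝ × ℝ × ℝ × ℝ :=
  (deriv (fun a => f (x.1, x.2.1, a, x.2.2.2)) x.2.2.1,
   deriv (fun a => f (x.1, x.2.1, x.2.2.1, a)) x.2.2.2,
   -deriv (fun a => f (a, x.2.1, x.2.2.1, x.2.2.2)) x.1,
   -deriv (fun a => f (x.1, a, x.2.2.1, x.2.2.2)) x.2.1)

lemma ham_X1 (q1 q2 p1 p2 : ℝ) (h : 0 < p1 - q1) :
    hamVF (fun x => x.2.1 * Real.cos (Real.log (x.2.2.1 - x.1))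
        - x.2.2.2 * Real.sin (Real.log (x.2.2.1 - x.1))) (q1, q2, p1, p2)
    = (-(q2 * Real.sin (Real.log (p1 - q1)) + p2 * Real.cos (Real.log (p1 - q1))) / (p1 - q1),
       -Real.sin (Real.log (p1 - q1)),
       -(q2 * Real.sin (Real.log (p1 - q1)) + p2 * Real.cos (Real.log (p1 - q1))) / (p1 - q1),
       -Real.cos (Real.log (p1 - q1))) := by
  have hne : p1 - q1 ≠ 0 := ne_of_gt h
  have hlog1 : HasDerivAt (fun a : ℝ => Real.log (a - q1)) (1 / (p1 - q1)) p1 := by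
    simpa using ((hasDerivAt_id' (x := p1)).sub_const q1).log hne
  have hlog3 : HasDerivAt (fun a : ℝ => Real.log (p1 - a)) (-1 / (p1 - q1)) q1 := by
    simpa using ((hasDerivAt_id' (x := q1)).const_sub p1).log hne
  have h1 : HasDerivAt (fun a : ℝ => q2 * Real.cos (Real.log (a - q1))
      - p2 * Real.sin (Real.log (a - q1)))
      (q2 * (-Real.sin (Real.log (p1 - q1)) * (1 / (p1 - q1)))
        - p2 * (Real.cos (Real.log (p1 - q1)) * (1 / (p1 - q1)))) p1 :=
    (hlog1.cos.const_mul q2).sub (hlog1.sin.const_mul p2)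
  have h3 : HasDerivAt (fun a : ℝ => q2 * Real.cos (Real.log (p1 - a))
      - p2 * Real.sin (Real.log (p1 - a)))
      (q2 * (-Real.sin (Real.log (p1 - q1)) * (-1 / (p1 - q1)))
        - p2 * (Real.cos (Real.log (p1 - q1)) * (-1 / (p1 - q1)))) q1 :=
    (hlog3.cos.const_mul q2).sub (hlog3.sin.const_mul p2)
  have h2 : HasDerivAt (fun a : ℝ => q2 * Real.cos (Real.log (p1 - q1))
      - a * Real.sin (Real.log (p1 - q1))) (-Real.sin (Real.log (p1 - q1))) p2 := by
    simpa using (((hasDerivAt_id' (x := p2)).mul_const (Real.sin (Real.log (p1 - q1)))).const_sub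
      (q2 * Real.cos (Real.log (p1 - q1))))
  have h4 : HasDerivAt (fun a : ℝ => a * Real.cos (Real.log (p1 - q1))
      - p2 * Real.sin (Real.log (p1 - q1))) (Real.cos (Real.log (p1 - q1))) q2 := by
    simpa using ((hasDerivAt_id' (x := q2)).mul_const (Real.cos (Real.log (p1 - q1)))).sub_const
      (p2 * Real.sin (Real.log (p1 - q1)))
  simp only [hamVF]
  rw [h1.deriv, h2.deriv, h3.deriv, h4.deriv]
  simp only [Prod.mk.injEq]
  refine ⟨by field_simp; try ring, trivial, by field_simp; try ring, trivial⟩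

lemma ham_Y1 (q1 q2 p1 p2 : ℝ) (h : 0 < p1 - q1) :
    hamVF (fun x => x.2.1 * Real.sin (Real.log (x.2.2.1 - x.1))
        + x.2.2.2 * Real.cos (Real.log (x.2.2.1 - x.1))) (q1, q2, p1, p2)
    = ((q2 * Real.cos (Real.log (p1 - q1)) - p2 * Real.sin (Real.log (p1 - q1))) / (p1 - q1),
       Real.cos (Real.log (p1 - q1)),
       (q2 * Real.cos (Real.log (p1 - q1)) - p2 * Real.sin (Real.log (p1 - q1))) / (p1 - q1),
       -Real.sin (Real.log (p1 - q1))) := by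
  have hne : p1 - q1 ≠ 0 := ne_of_gt h
  have hlog1 : HasDerivAt (fun a : ℝ => Real.log (a - q1)) (1 / (p1 - q1)) p1 := by
    simpa using ((hasDerivAt_id' (x := p1)).sub_const q1).log hne
  have hlog3 : HasDerivAt (fun a : ℝ => Real.log (p1 - a)) (-1 / (p1 - q1)) q1 := by
    simpa using ((hasDerivAt_id' (x := q1)).const_sub p1).log hne
  have h1 : HasDerivAt (fun a : ℝ => q2 * Real.sin (Real.log (a - q1))
      + p2 * Real.cos (Real.log (a - q1)))
      (q2 * (Real.cos (Real.log (p1 - q1)) * (1 / (p1 - q1)))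
        + p2 * (-Real.sin (Real.log (p1 - q1)) * (1 / (p1 - q1)))) p1 :=
    (hlog1.sin.const_mul q2).add (hlog1.cos.const_mul p2)
  have h3 : HasDerivAt (fun a : ℝ => q2 * Real.sin (Real.log (p1 - a))
      + p2 * Real.cos (Real.log (p1 - a)))
      (q2 * (Real.cos (Real.log (p1 - q1)) * (-1 / (p1 - q1)))
        + p2 * (-Real.sin (Real.log (p1 - q1)) * (-1 / (p1 - q1)))) q1 :=
    (hlog3.sin.const_mul q2).add (hlog3.cos.const_mul p2)
  have h2 : HasDerivAt (fun a : ℝ => q2 * Real.sin (Real.log (p1 - q1))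
      + a * Real.cos (Real.log (p1 - q1))) (Real.cos (Real.log (p1 - q1))) p2 := by
    simpa using (((hasDerivAt_id' (x := p2)).mul_const (Real.cos (Real.log (p1 - q1)))).const_add
      (q2 * Real.sin (Real.log (p1 - q1))))
  have h4 : HasDerivAt (fun a : ℝ => a * Real.sin (Real.log (p1 - q1))
      + p2 * Real.cos (Real.log (p1 - q1))) (Real.sin (Real.log (p1 - q1))) q2 := by
    simpa using ((hasDerivAt_id' (x := q2)).mul_const (Real.sin (Real.log (p1 - q1)))).add_const
      (p2 * Real.cos (Real.log (p1 - q1)))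
  simp only [hamVF]
  rw [h1.deriv, h2.deriv, h3.deriv, h4.deriv]
  simp only [Prod.mk.injEq]
  refine ⟨by field_simp; try ring, trivial, by field_simp; try ring, trivial⟩

/-- The Hamiltonian vector fields of `X₁` and `Y₁` on the open set
`{p₁ − q₁ > 0}` are complete: through every point there is an integral curve
defined for all times and remaining in the set. -/
theorem stmt15 :
    let D : Set (ℝ × ℝ × ℝ × ℝ) := {x | x.2.2.1 - x.1 > 0}
    let X1 : ℝ × ℝ × ℝ × ℝ → ℝ := fun x =>
      x.2.1 * Real.cos (Real.log (x.2.2.1 - x.1))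
        - x.2.2.2 * Real.sin (Real.log (x.2.2.1 - x.1))
    let Y1 : ℝ × ℝ × ℝ × ℝ → ℝ := fun x =>
      x.2.1 * Real.sin (Real.log (x.2.2.1 - x.1))
        + x.2.2.2 * Real.cos (Real.log (x.2.2.1 - x.1))
    ∀ x₀ ∈ D,
      (∃ γ : ℝ → ℝ × ℝ × ℝ × ℝ, γ 0 = x₀ ∧
        ∀ t : ℝ, γ t ∈ D ∧ HasDerivAt γ (hamVF X1 (γ t)) t) ∧
      (∃ γ : ℝ → ℝ × ℝ × ℝ × ℝ, γ 0 = x₀ ∧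
        ∀ t : ℝ, γ t ∈ D ∧ HasDerivAt γ (hamVF Y1 (γ t)) t) := by
  intro D X1 Y1 x₀ hx₀
  obtain ⟨q1, q2, p1, p2⟩ := x₀
  have h : 0 < p1 - q1 := hx₀
  set u : ℝ := p1 - q1 with hu
  set s : ℝ := Real.sin (Real.log u) with hs
  set c : ℝ := Real.cos (Real.log u) with hc
  have hune : u ≠ 0 := ne_of_gt h
  constructor
  · -- flow of X₁
    set Y0 : ℝ := q2 * s + p2 * c with hY0
    refine ⟨fun t => (q1 + (t ^ 2 / 2 - Y0 * t) / u, q2 - t * s,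
        p1 + (t ^ 2 / 2 - Y0 * t) / u, p2 - t * c), by norm_num, fun t => ?_⟩
    have harg : (p1 + (t ^ 2 / 2 - Y0 * t) / u) - (q1 + (t ^ 2 / 2 - Y0 * t) / u) = u := by
      ring_nf
      exact hu.symm
    constructor
    · show (p1 + (t ^ 2 / 2 - Y0 * t) / u) - (q1 + (t ^ 2 / 2 - Y0 * t) / u) > 0
      rw [harg]; exact h
    · show HasDerivAt _ (hamVF (fun x => x.2.1 * Real.cos (Real.log (x.2.2.1 - x.1))
        - x.2.2.2 * Real.sin (Real.log (x.2.2.1 - x.1))) _) t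
      have hsc : s ^ 2 + c ^ 2 = 1 := by
        rw [hs, hc]; exact Real.sin_sq_add_cos_sq _
      rw [ham_X1 _ _ _ _ (by rw [harg]; exact h)]
      rw [harg]
      have h1 : HasDerivAt (fun t : ℝ => q1 + (t ^ 2 / 2 - Y0 * t) / u)
          ((2 * t ^ 1 / 2 - Y0 * 1) / u) t :=
        ((((hasDerivAt_pow 2 t).div_const 2).sub
          ((hasDerivAt_id' (x := t)).const_mul Y0)).div_const u).const_add q1
      have h3 : HasDerivAt (fun t : ℝ => p1 + (t ^ 2 / 2 - Y0 * t) / u)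
          ((2 * t ^ 1 / 2 - Y0 * 1) / u) t :=
        ((((hasDerivAt_pow 2 t).div_const 2).sub
          ((hasDerivAt_id' (x := t)).const_mul Y0)).div_const u).const_add p1
      have h2 : HasDerivAt (fun t : ℝ => q2 - t * s) (-s) t := by
        simpa using ((hasDerivAt_id' (x := t)).mul_const s).const_sub q2
      have h4 : HasDerivAt (fun t : ℝ => p2 - t * c) (-c) t := by
        simpa using ((hasDerivAt_id' (x := t)).mul_const c).const_sub p2
      have H := h1.prodMk (h2.prodMk (h3.prodMk h4))
      convert H using 1
      simp only [Prod.mk.injEq]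
      refine ⟨?_, rfl, ?_, rfl⟩ <;>
        · rw [hY0]; field_simp; linear_combination t * hsc
  · -- flow of Y₁
    set X0 : ℝ := q2 * c - p2 * s with hX0
    refine ⟨fun t => (q1 + (X0 * t + t ^ 2 / 2) / u, q2 + t * c,
        p1 + (X0 * t + t ^ 2 / 2) / u, p2 - t * s), by norm_num, fun t => ?_⟩
    have harg : (p1 + (X0 * t + t ^ 2 / 2) / u) - (q1 + (X0 * t + t ^ 2 / 2) / u) = u := by
      ring_nf
      exact hu.symm
    constructor
    · show (p1 + (X0 * t + t ^ 2 / 2) / u) - (q1 + (X0 * t + t ^ 2 / 2) / u) > 0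
      rw [harg]; exact h
    · show HasDerivAt _ (hamVF (fun x => x.2.1 * Real.sin (Real.log (x.2.2.1 - x.1))
        + x.2.2.2 * Real.cos (Real.log (x.2.2.1 - x.1))) _) t
      have hsc : s ^ 2 + c ^ 2 = 1 := by
        rw [hs, hc]; exact Real.sin_sq_add_cos_sq _
      rw [ham_Y1 _ _ _ _ (by rw [harg]; exact h)]
      rw [harg]
      have h1 : HasDerivAt (fun t : ℝ => q1 + (X0 * t + t ^ 2 / 2) / u)
          ((X0 * 1 + 2 * t ^ 1 / 2) / u) t :=
        ((((hasDerivAt_id' (x := t)).const_mul X0).add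
          ((hasDerivAt_pow 2 t).div_const 2)).div_const u).const_add q1
      have h3 : HasDerivAt (fun t : ℝ => p1 + (X0 * t + t ^ 2 / 2) / u)
          ((X0 * 1 + 2 * t ^ 1 / 2) / u) t :=
        ((((hasDerivAt_id' (x := t)).const_mul X0).add
          ((hasDerivAt_pow 2 t).div_const 2)).div_const u).const_add p1
      have h2 : HasDerivAt (fun t : ℝ => q2 + t * c) c t := by
        simpa using ((hasDerivAt_id' (x := t)).mul_const c).const_add q2
      have h4 : HasDerivAt (fun t : ℝ => p2 - t * s) (-s) t := by
        simpa using ((hasDerivAt_id' (x := t)).mul_const s).const_sub p2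
      have H := h1.prodMk (h2.prodMk (h3.prodMk h4))
      convert H using 1
      simp only [Prod.mk.injEq]
      refine ⟨?_, rfl, ?_, rfl⟩ <;>
        · rw [hX0]; field_simp; linear_combination t * hsc
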